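/- Let C^{a,b} be a bounded first-quadrant double complex of vector spaces over a field k. Assume: (i) the total complex Tot(C) is exact in every degree; and (ii) for every a ≥ 1 and b ≥ 1, the horizontal cohomology of the row (C^{•,b}, d_h) at position a vanishes. Let Z^b = ker(d_h : C^{0,b} → C^{1,b}), a cochain complex under the restriction of d_v. Then for every b ≥ 2 there is a k-linear isomorphism H^b(Z^•, d_v) ≅ H^{b−1}(C^{•,0}, d_h), where H^{b−1}(C^{•,0}, d_h) is the horizontal cohomology of the bottom row at position b−1. -/

import Mathlib

open DirectSum

set_option maxHeartbeats 1000000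
set_option synthInstance.maxHeartbeats 1000000

noncomputable section

variable (k : Type) [Field k]
variable (C : ℕ → ℕ → Type) [∀ a b, AddCommGroup (C a b)] [∀ a b, Module k (C a b)]
variable (dh : ∀ a b : ℕ, C a b →ₗ[k] C (a + 1) b)
variable (dv : ∀ a b : ℕ, C a b →ₗ[k] C a (b + 1))

/-- The index set `{(a, b) : a + b = m}` of the degree-`m` term of the total complex. -/
def TotIdx (m : ℕ) : Type := {p : ℕ × ℕ // p.1 + p.2 = m}

instance (m : ℕ) : DecidableEq (TotIdx m) :=
  inferInstanceAs (DecidableEq {p : ℕ × ℕ // p.1 + p.2 = m})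

/-- The degree-`m` term `Tot^m = ⊕_{a+b=m} C^{a,b}` of the total complex. -/
def Tot (m : ℕ) : Type := ⨁ (p : TotIdx m), C p.1.1 p.1.2

noncomputable instance (m : ℕ) : AddCommGroup (Tot C m) :=
  inferInstanceAs (AddCommGroup (⨁ (p : TotIdx m), C p.1.1 p.1.2))

noncomputable instance (m : ℕ) : Module k (Tot C m) :=
  inferInstanceAs (Module k (⨁ (p : TotIdx m), C p.1.1 p.1.2))

/-- The total differential `d_h + d_v : Tot^m → Tot^{m+1}`. -/
def totD (m : ℕ) : Tot C m →ₗ[k] Tot C (m + 1) :=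
  DirectSum.toModule k (TotIdx m) (Tot C (m + 1)) fun p =>
    ((DirectSum.lof k (TotIdx (m + 1)) (fun r => C r.1.1 r.1.2)
        ⟨(p.1.1 + 1, p.1.2), by have := p.2; omega⟩).comp (dh p.1.1 p.1.2)) +
    ((DirectSum.lof k (TotIdx (m + 1)) (fun r => C r.1.1 r.1.2)
        ⟨(p.1.1, p.1.2 + 1), by have := p.2; omega⟩).comp (dv p.1.1 p.1.2))

end

noncomputable section Aux

variable (k : Type) [Field k]
variable (C : ℕ → ℕ → Type) [∀ a b, AddCommGroup (C a b)] [∀ a b, Module k (C a b)]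
variable (dh : ∀ a b : ℕ, C a b →ₗ[k] C (a + 1) b)
variable (dv : ∀ a b : ℕ, C a b →ₗ[k] C a (b + 1))

/-- abbreviation for the canonical inclusion -/
def lf (m : ℕ) (p : TotIdx m) : C p.1.1 p.1.2 →ₗ[k] Tot C m :=
  DirectSum.lof k (TotIdx m) (fun q => C q.1.1 q.1.2) p

/-- component projection -/
def cpt (m : ℕ) (p : TotIdx m) : Tot C m →ₗ[k] C p.1.1 p.1.2 :=
  DirectSum.component k (TotIdx m) (fun q => C q.1.1 q.1.2) p

lemma cpt_lf_self (m : ℕ) (p : {p : ℕ × ℕ // p.1 + p.2 = m}) (x : C p.1.1 p.1.2) :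
    cpt k C m p (lf k C m p x) = x := by
  simp only [cpt, lf]
  exact DirectSum.component.lof_self (M := fun q : TotIdx m => C q.1.1 q.1.2) k p x

lemma cpt_lf_ne (m : ℕ) (p q : {p : ℕ × ℕ // p.1 + p.2 = m}) (h : q ≠ p) (x : C q.1.1 q.1.2) :
    cpt k C m p (lf k C m q x) = 0 := by
  simp only [cpt, lf, DirectSum.component, DirectSum.lof]
  exact DFinsupp.single_eq_of_ne h.symm

lemma tot_ext (m : ℕ) {x y : Tot C m} (h : ∀ p, cpt k C m p x = cpt k C m p y) :
    x = y :=
  DirectSum.ext_component k h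

lemma totD_lf (m : ℕ) (p : TotIdx m) (x : C p.1.1 p.1.2) :
    totD k C dh dv m (lf k C m p x)
      = lf k C (m+1) ⟨(p.1.1 + 1, p.1.2), by have := p.2; omega⟩ (dh p.1.1 p.1.2 x)
        + lf k C (m+1) ⟨(p.1.1, p.1.2 + 1), by have := p.2; omega⟩ (dv p.1.1 p.1.2 x) := by
  rw [totD, lf]
  exact DirectSum.toModule_lof (φ := fun p : TotIdx m =>
    ((DirectSum.lof k (TotIdx (m + 1)) (fun r => C r.1.1 r.1.2)
        ⟨(p.1.1 + 1, p.1.2), by have := p.2; omega⟩).comp (dh p.1.1 p.1.2)) +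
    ((DirectSum.lof k (TotIdx (m + 1)) (fun r => C r.1.1 r.1.2)
        ⟨(p.1.1, p.1.2 + 1), by have := p.2; omega⟩).comp (dv p.1.1 p.1.2))) k p x

end Aux

noncomputable section Aux2

variable (k : Type) [Field k]
variable (C : ℕ → ℕ → Type) [∀ a b, AddCommGroup (C a b)] [∀ a b, Module k (C a b)]
variable (dh : ∀ a b : ℕ, C a b →ₗ[k] C (a + 1) b)
variable (dv : ∀ a b : ℕ, C a b →ₗ[k] C a (b + 1))

lemma mkne {m : ℕ} {a b c d : ℕ} {h1 : a + b = m} {h2 : c + d = m}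
    (h : a ≠ c ∨ b ≠ d) : (⟨(a,b),h1⟩ : TotIdx m) ≠ ⟨(c,d),h2⟩ := by
  intro e
  have := congrArg Subtype.val e
  rw [Prod.mk.injEq] at this
  tauto

lemma totD_lf' (m a c : ℕ) (h : a + c = m) (x : C a c) :
    totD k C dh dv m (lf k C m ⟨(a, c), h⟩ x)
      = lf k C (m+1) ⟨(a + 1, c), by omega⟩ (dh a c x)
        + lf k C (m+1) ⟨(a, c + 1), by omega⟩ (dv a c x) :=
  totD_lf k C dh dv m ⟨(a,c),h⟩ x

lemma of_eq_lf (m : ℕ) (p : {p : ℕ × ℕ // p.1 + p.2 = m}) (x : C p.1.1 p.1.2) :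
    DirectSum.of (fun q : TotIdx m => C q.1.1 q.1.2) p x = lf k C m p x := rfl

lemma cpt_totD_bottom (m : ℕ) (Y : Tot C m) :
    cpt k C (m+1) ⟨(m+1, 0), by omega⟩ (totD k C dh dv m Y)
      = dh m 0 (cpt k C m ⟨(m, 0), by omega⟩ Y) := by
  induction Y using DirectSum.induction_on with
  | zero => rw [show (0 : ⨁ (p : TotIdx m), C p.1.1 p.1.2) = (0 : Tot C m) from rfl]; simp
  | of p x =>
      obtain ⟨⟨e, f⟩, hp⟩ := p
      rw [of_eq_lf k C, totD_lf' k C dh dv, map_add]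
      by_cases hf : f = 0
      · subst hf
        have he : e = m := by omega
        subst he
        rw [cpt_lf_self, cpt_lf_self, cpt_lf_ne k C _ _ _ (mkne (by omega))]
        simp
      · rw [cpt_lf_ne k C _ _ _ (mkne (by omega)),
          cpt_lf_ne k C _ _ _ (mkne (by omega)),
          cpt_lf_ne k C _ _ _ (mkne (by omega))]
        simp
  | add A B hA hB => obtain ⟨A, rfl⟩ : ∃ A' : Tot C m, A' = A := ⟨A, rfl⟩; obtain ⟨B, rfl⟩ : ∃ B' : Tot C m, B' = B := ⟨B, rfl⟩; change cpt k C (m+1) ⟨(m+1, 0), by omega⟩ (totD k C dh dv m (A + B : Tot C m)) = dh m 0 (cpt k C m ⟨(m, 0), by omega⟩ (A + B : Tot C m)); simp [map_add, hA, hB]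

lemma cpt_totD_left (m : ℕ) (Y : Tot C m) :
    cpt k C (m+1) ⟨(0, m+1), by omega⟩ (totD k C dh dv m Y)
      = dv 0 m (cpt k C m ⟨(0, m), by omega⟩ Y) := by
  induction Y using DirectSum.induction_on with
  | zero => rw [show (0 : ⨁ (p : TotIdx m), C p.1.1 p.1.2) = (0 : Tot C m) from rfl]; simp
  | of p x =>
      obtain ⟨⟨e, f⟩, hp⟩ := p
      rw [of_eq_lf k C, totD_lf' k C dh dv, map_add]
      by_cases he : e = 0
      · subst he
        have hf : f = m := by omega
        subst hf
        rw [cpt_lf_self, cpt_lf_self, cpt_lf_ne k C _ _ _ (mkne (by omega))]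
        simp
      · rw [cpt_lf_ne k C _ _ _ (mkne (by omega)),
          cpt_lf_ne k C _ _ _ (mkne (by omega)),
          cpt_lf_ne k C _ _ _ (mkne (by omega))]
        simp
  | add A B hA hB => obtain ⟨A, rfl⟩ : ∃ A' : Tot C m, A' = A := ⟨A, rfl⟩; obtain ⟨B, rfl⟩ : ∃ B' : Tot C m, B' = B := ⟨B, rfl⟩; change cpt k C (m+1) ⟨(0, m+1), by omega⟩ (totD k C dh dv m (A + B : Tot C m)) = dv 0 m (cpt k C m ⟨(0, m), by omega⟩ (A + B : Tot C m)); simp [map_add, hA, hB]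

lemma cpt_totD_mid (m a c : ℕ) (h : (a+1) + (c+1) = m + 1) (Y : Tot C m) :
    cpt k C (m+1) ⟨(a+1, c+1), h⟩ (totD k C dh dv m Y)
      = dh a (c+1) (cpt k C m ⟨(a, c+1), by omega⟩ Y)
        + dv (a+1) c (cpt k C m ⟨(a+1, c), by omega⟩ Y) := by
  induction Y using DirectSum.induction_on with
  | zero => rw [show (0 : ⨁ (p : TotIdx m), C p.1.1 p.1.2) = (0 : Tot C m) from rfl]; simp
  | of p x =>
      obtain ⟨⟨e, f⟩, hp⟩ := p
      rw [of_eq_lf k C, totD_lf' k C dh dv, map_add]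
      by_cases h1 : e = a ∧ f = c + 1
      · obtain ⟨rfl, rfl⟩ := h1
        rw [cpt_lf_self, cpt_lf_self, cpt_lf_ne k C _ _ _ (mkne (by omega)),
          cpt_lf_ne k C _ _ _ (mkne (by omega))]
        simp
      · by_cases h2 : e = a + 1 ∧ f = c
        · obtain ⟨rfl, rfl⟩ := h2
          rw [cpt_lf_self, cpt_lf_self, cpt_lf_ne k C _ _ _ (mkne (by omega)),
            cpt_lf_ne k C _ _ _ (mkne (by omega))]
          simp
        · rw [cpt_lf_ne k C _ _ _ (mkne (by omega)),
            cpt_lf_ne k C _ _ _ (mkne (by omega)),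
            cpt_lf_ne k C _ _ _ (mkne (by omega)),
            cpt_lf_ne k C _ _ _ (mkne (by omega))]
          simp
  | add A B hA hB =>
      obtain ⟨A, rfl⟩ : ∃ A' : Tot C m, A' = A := ⟨A, rfl⟩; obtain ⟨B, rfl⟩ : ∃ B' : Tot C m, B' = B := ⟨B, rfl⟩; change cpt k C (m+1) ⟨(a+1, c+1), h⟩ (totD k C dh dv m (A + B : Tot C m)) = dh a (c+1) (cpt k C m ⟨(a, c+1), by omega⟩ (A + B : Tot C m)) + dv (a+1) c (cpt k C m ⟨(a+1, c), by omega⟩ (A + B : Tot C m)); simp only [map_add, hA, hB]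
      abel

end Aux2

noncomputable section Aux3

variable (k : Type) [Field k]
variable (C : ℕ → ℕ → Type) [∀ a b, AddCommGroup (C a b)] [∀ a b, Module k (C a b)]
variable (dh : ∀ a b : ℕ, C a b →ₗ[k] C (a + 1) b)
variable (dv : ∀ a b : ℕ, C a b →ₗ[k] C a (b + 1))

lemma totD_totD
    (hdh : ∀ a b, (dh (a + 1) b).comp (dh a b) = 0)
    (hdv : ∀ a b, (dv a (b + 1)).comp (dv a b) = 0)
    (hanti : ∀ a b, (dh a (b + 1)).comp (dv a b) + (dv (a + 1) b).comp (dh a b) = 0)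
    (m : ℕ) (Y : Tot C m) :
    totD k C dh dv (m+1) (totD k C dh dv m Y) = 0 := by
  induction Y using DirectSum.induction_on with
  | zero => rw [show (0 : ⨁ (p : TotIdx m), C p.1.1 p.1.2) = (0 : Tot C m) from rfl]; simp
  | of p x =>
      obtain ⟨⟨e, f⟩, hp⟩ := p
      rw [of_eq_lf k C, totD_lf' k C dh dv, map_add, totD_lf' k C dh dv,
        totD_lf' k C dh dv]
      have h1 : dh (e+1) f (dh e f x) = 0 := LinearMap.congr_fun (hdh e f) x
      have h2 : dv e (f+1) (dv e f x) = 0 := LinearMap.congr_fun (hdv e f) x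
      have h3 : dh e (f+1) (dv e f x) + dv (e+1) f (dh e f x) = 0 := by
        have := LinearMap.congr_fun (hanti e f) x
        simpa using this
      rw [h1, h2, map_zero, map_zero, zero_add, add_zero, ← map_add]
      rw [show dv (e+1) f (dh e f x) + dh e (f+1) (dv e f x) = 0 from
        (add_comm _ _).trans h3, map_zero]
  | add A B hA hB => obtain ⟨A, rfl⟩ : ∃ A' : Tot C m, A' = A := ⟨A, rfl⟩; obtain ⟨B, rfl⟩ : ∃ B' : Tot C m, B' = B := ⟨B, rfl⟩; change totD k C dh dv (m+1) (totD k C dh dv m (A + B : Tot C m)) = 0; simp [map_add, hA, hB]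

lemma stair
    (hdv : ∀ a b, (dv a (b + 1)).comp (dv a b) = 0)
    (hanti : ∀ a b, (dh a (b + 1)).comp (dv a b) + (dv (a + 1) b).comp (dh a b) = 0)
    (hrows : ∀ a b : ℕ,
      LinearMap.ker (dh (a + 1) (b + 1)) = LinearMap.range (dh a (b + 1))) :
    ∀ (a m j : ℕ) (hm : a + j = m) (u : C a j)
      (hu : dv (a+1) j (dh a j u) = 0),
      ∃ Y : Tot C m,
        cpt k C m ⟨(a, j), hm⟩ Y = u ∧
        (∀ (e f : ℕ) (hq : e + f = m), a < e → cpt k C m ⟨(e,f),hq⟩ Y = 0) ∧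
        (∀ (e f : ℕ) (hq : e + f = m + 1), ¬(e = 0 ∧ f = m+1) → ¬(e = a+1 ∧ f = j) →
          cpt k C (m+1) ⟨(e,f),hq⟩ (totD k C dh dv m Y) = 0) ∧
        cpt k C (m+1) ⟨(a+1, j), by omega⟩ (totD k C dh dv m Y) = dh a j u := by
  intro a
  induction a with
  | zero =>
    intro m j hm u hu
    refine ⟨lf k C m ⟨(0,j),hm⟩ u, cpt_lf_self k C m ⟨(0,j),hm⟩ u, ?_, ?_, ?_⟩
    · intro e f hq hp
      exact cpt_lf_ne k C m _ _ (mkne (by omega)) u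
    · intro e f hq hq1 hq2
      rw [totD_lf' k C dh dv, map_add,
        cpt_lf_ne k C _ _ _ (mkne (by omega)),
        cpt_lf_ne k C _ _ _ (mkne (by omega))]
      simp
    · rw [totD_lf' k C dh dv, map_add, cpt_lf_self,
        cpt_lf_ne k C _ _ _ (mkne (by omega))]
      simp
  | succ a ih =>
    intro m j hm u hu
    have h1 : dh (a+1) (j+1) (dv (a+1) j u) = 0 := by
      have h := LinearMap.congr_fun (hanti (a+1) j) u
      simp only [LinearMap.add_apply, LinearMap.comp_apply, LinearMap.zero_apply] at h
      rw [hu, add_zero] at h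
      exact h
    have hmem : -(dv (a+1) j u) ∈ LinearMap.range (dh a (j+1)) := by
      rw [← hrows a j]
      simp [LinearMap.mem_ker, h1]
    obtain ⟨v, hv⟩ := hmem
    have hv' : dv (a+1) (j+1) (dh a (j+1) v) = 0 := by
      have h := LinearMap.congr_fun (hdv (a+1) j) u
      simp only [LinearMap.comp_apply, LinearMap.zero_apply] at h
      rw [hv, map_neg, h, neg_zero]
    obtain ⟨Y', c1, c2, c3, c4⟩ := ih m (j+1) (by omega) v hv'
    refine ⟨lf k C m ⟨(a+1, j), hm⟩ u + Y', ?_, ?_, ?_, ?_⟩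
    · rw [map_add, cpt_lf_self, c2 (a+1) j hm (by omega)]
      simp
    · intro e f hq hp
      rw [map_add, cpt_lf_ne k C m _ _ (mkne (by omega)),
        c2 e f hq (by omega)]
      simp
    · intro e f hq hq1 hq2
      rw [map_add, map_add, totD_lf' k C dh dv, map_add,
        cpt_lf_ne k C _ _ _ (mkne (by omega))]
      by_cases hc : e = a+1 ∧ f = j+1
      · obtain ⟨rfl, rfl⟩ := hc
        rw [cpt_lf_self, c4, hv]
        simp
      · rw [cpt_lf_ne k C _ _ _ (mkne (by omega)),
          c3 e f hq hq1 (by omega)]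
        simp
    · rw [map_add, map_add, totD_lf' k C dh dv, map_add, cpt_lf_self,
        cpt_lf_ne k C _ _ _ (mkne (by omega)),
        c3 (a+1+1) j (by omega) (by omega) (by omega)]
      simp

lemma clearLem
    (hdh : ∀ a b, (dh (a + 1) b).comp (dh a b) = 0)
    (hdv : ∀ a b, (dv a (b + 1)).comp (dv a b) = 0)
    (hanti : ∀ a b, (dh a (b + 1)).comp (dv a b) + (dv (a + 1) b).comp (dh a b) = 0)
    (hrows : ∀ a b : ℕ,
      LinearMap.ker (dh (a + 1) (b + 1)) = LinearMap.range (dh a (b + 1))) :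
    ∀ (a c n : ℕ) (h : a + (c+1) = n+1) (Y : Tot C (n+1))
      (_ : ∀ (e f : ℕ) (hq : e + f = n + 2), ¬(e = 0 ∧ f = n+2) →
        cpt k C (n+2) ⟨(e,f),hq⟩ (totD k C dh dv (n+1) Y) = 0)
      (_ : ∀ (e f : ℕ) (hq : e + f = n + 1), a < e → cpt k C (n+1) ⟨(e,f),hq⟩ Y = 0),
      ∃ Y' : Tot C (n+1), totD k C dh dv (n+1) Y' = totD k C dh dv (n+1) Y ∧
        ∀ (e f : ℕ) (hq : e + f = n + 1), 0 < e → cpt k C (n+1) ⟨(e,f),hq⟩ Y' = 0 := by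
  intro a
  induction a with
  | zero =>
    intro c n h Y H1 H2
    exact ⟨Y, rfl, fun e f hq hp => H2 e f hq hp⟩
  | succ a ih =>
    intro c n h Y H1 H2
    have hdhu : dh (a+1) (c+1) (cpt k C (n+1) ⟨(a+1, c+1), h⟩ Y) = 0 := by
      have hmid := cpt_totD_mid k C dh dv (n+1) (a+1) c (by omega) Y
      rw [H1 (a+1+1) (c+1) (by omega) (by omega),
        H2 (a+1+1) c (by omega) (by omega), map_zero, add_zero] at hmid
      exact hmid.symm
    have hmem : (cpt k C (n+1) ⟨(a+1, c+1), h⟩ Y) ∈ LinearMap.range (dh a (c+1)) := by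
      rw [← hrows a c]
      exact hdhu
    obtain ⟨x, hx⟩ := hmem
    set Y1 := Y - totD k C dh dv n (lf k C n ⟨(a, c+1), by omega⟩ x) with hY1
    have htot1 : totD k C dh dv (n+1) Y1 = totD k C dh dv (n+1) Y := by
      rw [hY1, map_sub, totD_totD k C dh dv hdh hdv hanti, sub_zero]
    have H1' : ∀ (e f : ℕ) (hq : e + f = n + 2), ¬(e = 0 ∧ f = n+2) →
        cpt k C (n+2) ⟨(e,f),hq⟩ (totD k C dh dv (n+1) Y1) = 0 := by
      intro e f hq hne
      rw [htot1]
      exact H1 e f hq hne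
    have H2' : ∀ (e f : ℕ) (hq : e + f = n + 1), a < e →
        cpt k C (n+1) ⟨(e,f),hq⟩ Y1 = 0 := by
      intro e f hq hp
      rw [hY1, map_sub, totD_lf' k C dh dv, map_add]
      by_cases hc : e = a+1 ∧ f = c+1
      · obtain ⟨rfl, rfl⟩ := hc
        rw [cpt_lf_self, cpt_lf_ne k C _ _ _ (mkne (by omega)), hx]
        simp
      · rw [cpt_lf_ne k C _ _ _ (mkne (by omega)),
          cpt_lf_ne k C _ _ _ (mkne (by omega)),
          H2 e f hq (by omega)]
        simp
    obtain ⟨Y', e1, e2⟩ := ih (c+1) n (by omega) Y1 H1' H2'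
    exact ⟨Y', by rw [e1, htot1], e2⟩

end Aux3

set_option maxHeartbeats 8000000


set_option maxHeartbeats 8000000

/-- **Statement 4.** Let `C` be a bounded first-quadrant double complex of vector spaces (with
anticommuting differentials) whose total complex is exact in every degree, and whose rows are
exact at every position `a ≥ 1` in every row `b ≥ 1`.  Let `Z^b = ker (d_h : C^{0,b} → C^{1,b})`,
a cochain complex under the restriction `dZ` of the vertical differential.  Then for every
`b ≥ 2` (written `b + 2` below) there is a `k`-linear isomorphism
`H^b(Z^•) ≅ H^{b-1}(C^{•,0})` with the horizontal cohomology of the bottom row at `b - 1`. -/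
theorem kernel_column_cohomology_iso_bottom_row
    (k : Type) [Field k]
    (C : ℕ → ℕ → Type) [∀ a b, AddCommGroup (C a b)] [∀ a b, Module k (C a b)]
    (dh : ∀ a b : ℕ, C a b →ₗ[k] C (a + 1) b)
    (dv : ∀ a b : ℕ, C a b →ₗ[k] C a (b + 1))
    (hdh : ∀ a b, (dh (a + 1) b).comp (dh a b) = 0)
    (hdv : ∀ a b, (dv a (b + 1)).comp (dv a b) = 0)
    (hanti : ∀ a b, (dh a (b + 1)).comp (dv a b) + (dv (a + 1) b).comp (dh a b) = 0)
    (hbdd : ∃ N : ℕ, ∀ a b, (N ≤ a ∨ N ≤ b) → ∀ x : C a b, x = 0)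
    (htot0 : LinearMap.ker (totD k C dh dv 0) = ⊥)
    (htot : ∀ m : ℕ,
      LinearMap.ker (totD k C dh dv (m + 1)) = LinearMap.range (totD k C dh dv m))
    (hrows : ∀ a b : ℕ,
      LinearMap.ker (dh (a + 1) (b + 1)) = LinearMap.range (dh a (b + 1)))
    (dZ : ∀ b : ℕ, ↥(LinearMap.ker (dh 0 b)) →ₗ[k] ↥(LinearMap.ker (dh 0 (b + 1))))
    (hdZ : ∀ (b : ℕ) (x : LinearMap.ker (dh 0 b)), ((dZ b x : C 0 (b + 1))) = dv 0 b (x : C 0 b)) :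
    ∀ b : ℕ, Nonempty (
      (↥(LinearMap.ker (dZ (b + 2))) ⧸
        Submodule.comap (LinearMap.ker (dZ (b + 2))).subtype (LinearMap.range (dZ (b + 1))))
      ≃ₗ[k]
      (↥(LinearMap.ker (dh (b + 1) 0)) ⧸
        Submodule.comap (LinearMap.ker (dh (b + 1) 0)).subtype (LinearMap.range (dh b 0)))) := by

  intro b
  classical
  -- the linear section of the total differential onto kernel of next one
  set K2 : Submodule k (Tot C (b+1+1)) := LinearMap.ker (totD k C dh dv (b+1+1)) with hK2
  have hker2 : K2 = LinearMap.range (totD k C dh dv (b+1)) := htot (b+1)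
  have hf : ∀ y : Tot C (b+1), totD k C dh dv (b+1) y ∈ K2 := by
    intro y
    rw [hker2]
    exact LinearMap.mem_range_self _ y
  set f : Tot C (b+1) →ₗ[k] K2 :=
    LinearMap.codRestrict K2 (totD k C dh dv (b+1)) hf with hfdef
  have hfsurj : LinearMap.range f = ⊤ := by
    rw [LinearMap.range_eq_top]
    rintro ⟨w, hw⟩
    rw [hker2] at hw
    obtain ⟨y, hy⟩ := hw
    exact ⟨y, Subtype.ext (by simpa [hfdef] using hy)⟩
  obtain ⟨σ, hσ⟩ := f.exists_rightInverse_of_surjective hfsurj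
  have hsec : ∀ w : K2, totD k C dh dv (b+1) (σ w) = w.val := by
    intro w
    have h2 : f (σ w) = w := by
      have := LinearMap.congr_fun hσ w
      simpa using this
    exact congrArg Subtype.val h2
  -- the inclusion of ker dZ into K2
  set J : ↥(LinearMap.ker (dZ (b+2))) →ₗ[k] Tot C (b+1+1) :=
    (lf k C (b+1+1) (⟨(0, b+1+1), by omega⟩ : TotIdx (b+1+1))).comp
      ((LinearMap.ker (dh 0 (b+2))).subtype.comp
        (LinearMap.ker (dZ (b+2))).subtype) with hJdef
  have hJmem : ∀ z : ↥(LinearMap.ker (dZ (b+2))), J z ∈ K2 := by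
    intro z
    have hzh : dh 0 (b+1+1) (z.val.val : C 0 (b+1+1)) = 0 := z.val.2
    have hzv : dv 0 (b+1+1) (z.val.val : C 0 (b+1+1)) = 0 := by
      have h0 : dZ (b+2) (z.val) = 0 := z.2
      have h1 : dv 0 (b+2) (z.val.val) = (dZ (b+2) z.val : C 0 (b+2+1)) :=
        (hdZ (b+2) z.val).symm
      rw [h0] at h1
      exact h1.trans rfl
    show totD k C dh dv (b+1+1) (J z) = 0
    have hJz : J z = lf k C (b+1+1) (⟨(0, b+1+1), by omega⟩ : TotIdx (b+1+1)) (z.val.val) := rfl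
    rw [hJz, totD_lf' k C dh dv, hzh, hzv, map_zero, map_zero, add_zero]
  set ι' : ↥(LinearMap.ker (dZ (b+2))) →ₗ[k] K2 :=
    LinearMap.codRestrict K2 J hJmem with hι'def
  set g0 : ↥(LinearMap.ker (dZ (b+2))) →ₗ[k] C (b+1) 0 :=
    (cpt k C (b+1) ⟨(b+1,0), by omega⟩).comp (σ.comp ι') with hg0def
  have key1 : ∀ z : ↥(LinearMap.ker (dZ (b+2))),
      totD k C dh dv (b+1) (σ (ι' z)) = lf k C (b+1+1) (⟨(0, b+1+1), by omega⟩ : TotIdx (b+1+1)) (z.val.val) := by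
    intro z
    rw [hsec (ι' z)]
    rfl
  have hg0 : ∀ z, dh (b+1) 0 (g0 z) = 0 := by
    intro z
    have hb := cpt_totD_bottom k C dh dv (b+1) (σ (ι' z))
    rw [key1 z, cpt_lf_ne k C _ _ _ (mkne (by omega))] at hb
    exact hb.symm
  set g1 : ↥(LinearMap.ker (dZ (b+2))) →ₗ[k] ↥(LinearMap.ker (dh (b+1) 0)) :=
    LinearMap.codRestrict (LinearMap.ker (dh (b+1) 0)) g0
      (fun z => LinearMap.mem_ker.mpr (hg0 z)) with hg1def
  set N : Submodule k ↥(LinearMap.ker (dZ (b + 2))) :=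
    Submodule.comap (LinearMap.ker (dZ (b + 2))).subtype (LinearMap.range (dZ (b + 1))) with hNdef
  set N' : Submodule k ↥(LinearMap.ker (dh (b+1) 0)) :=
    Submodule.comap (LinearMap.ker (dh (b + 1) 0)).subtype (LinearMap.range (dh b 0)) with hN'def
  set g : ↥(LinearMap.ker (dZ (b+2))) →ₗ[k]
      (↥(LinearMap.ker (dh (b+1) 0)) ⧸ N') := N'.mkQ.comp g1 with hgdef
  -- fundamental computation of g via any preimage of ι z
  have hdiff : ∀ (z : ↥(LinearMap.ker (dZ (b+2)))) (E : Tot C (b+1)),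
      totD k C dh dv (b+1) E = lf k C (b+1+1) (⟨(0, b+1+1), by omega⟩ : TotIdx (b+1+1)) (z.val.val) →
      ∃ X : Tot C b, g0 z = cpt k C (b+1) ⟨(b+1,0), by omega⟩ E
        + dh b 0 (cpt k C b ⟨(b,0), by omega⟩ X) := by
    intro z E hE
    have hker1 : σ (ι' z) - E ∈ LinearMap.ker (totD k C dh dv (b+1)) := by
      rw [LinearMap.mem_ker, map_sub, key1 z, hE, sub_self]
    rw [htot b] at hker1
    obtain ⟨X, hX⟩ := hker1
    refine ⟨X, ?_⟩
    have hσz : σ (ι' z) = E + totD k C dh dv b X := by rw [hX]; abel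
    have hg0z : g0 z = cpt k C (b+1) ⟨(b+1,0), by omega⟩ (E + totD k C dh dv b X) := by
      rw [hg0def]
      simp only [LinearMap.comp_apply]
      rw [hσz]
    rw [hg0z, map_add, cpt_totD_bottom k C dh dv b X]
  -- N ≤ ker g
  have hfwd : N ≤ LinearMap.ker g := by
    intro z hz
    rw [hNdef, Submodule.mem_comap] at hz
    obtain ⟨w, hw⟩ := hz
    have hE : totD k C dh dv (b+1) (lf k C (b+1) ⟨(0, b+1), by omega⟩ (w.val))
        = lf k C (b+1+1) (⟨(0, b+1+1), by omega⟩ : TotIdx (b+1+1)) (z.val.val) := by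
      rw [totD_lf' k C dh dv]
      have h1 : dh 0 (b+1) w.val = 0 := w.2
      have h2 : dv 0 (b+1) w.val = z.val.val := by
        have h3 := hdZ (b+1) w
        rw [hw] at h3
        exact h3.symm
      rw [h1, h2, map_zero, zero_add]
    obtain ⟨X, hXg⟩ := hdiff z _ hE
    rw [cpt_lf_ne k C _ _ _ (mkne (by omega))] at hXg
    have hmem : g1 z ∈ N' := by
      rw [hN'def, Submodule.mem_comap]
      exact ⟨cpt k C b ⟨(b,0), by omega⟩ X, ((zero_add _).symm.trans hXg.symm : _)⟩
    show g z = 0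
    rw [hgdef]
    simp only [LinearMap.comp_apply, Submodule.mkQ_apply]
    rw [Submodule.Quotient.mk_eq_zero]
    exact hmem
  -- ker g ≤ N
  have hrev : LinearMap.ker g ≤ N := by
    intro z hz
    have hmem : g1 z ∈ N' := by
      have h0 : N'.mkQ (g1 z) = 0 := hz
      rwa [Submodule.mkQ_apply, Submodule.Quotient.mk_eq_zero] at h0
    rw [hN'def, Submodule.mem_comap] at hmem
    obtain ⟨t, ht⟩ := hmem
    have ht' : dh b 0 t = g0 z := ht
    set Y0 := σ (ι' z) - totD k C dh dv b (lf k C b ⟨(b,0), by omega⟩ t) with hY0def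
    have hY0tot : totD k C dh dv (b+1) Y0 = lf k C (b+1+1) (⟨(0, b+1+1), by omega⟩ : TotIdx (b+1+1)) (z.val.val) := by
      rw [hY0def, map_sub, totD_totD k C dh dv hdh hdv hanti b, sub_zero, key1 z]
    have H1 : ∀ (e fq : ℕ) (hq : e + fq = b + 2), ¬(e = 0 ∧ fq = b+2) →
        cpt k C (b+2) ⟨(e,fq),hq⟩ (totD k C dh dv (b+1) Y0) = 0 := by
      intro e fq hq hne
      rw [hY0tot, cpt_lf_ne k C _ _ _ (mkne (by omega))]
    have H2 : ∀ (e fq : ℕ) (hq : e + fq = b + 1), b < e →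
        cpt k C (b+1) ⟨(e,fq),hq⟩ Y0 = 0 := by
      intro e fq hq hp
      have he : e = b+1 := by omega
      subst he
      have hfq : fq = 0 := by omega
      subst hfq
      have hcY : cpt k C (b+1) ⟨(b+1,0),hq⟩ (σ (ι' z)) = g0 z := by
        rw [hg0def]; rfl
      rw [hY0def, map_sub, totD_lf' k C dh dv, map_add, cpt_lf_self,
        cpt_lf_ne k C _ _ _ (mkne (by omega)), add_zero, ht', hcY, sub_self]
    obtain ⟨Y', hYd', hYc'⟩ :=
      clearLem k C dh dv hdh hdv hanti hrows b 0 b (by omega) Y0 H1 H2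
    set w := cpt k C (b+1) ⟨(0, b+1), by omega⟩ Y' with hwdef
    have hY'eq : Y' = lf k C (b+1) ⟨(0, b+1), by omega⟩ w := by
      apply tot_ext k C (b+1)
      intro p
      obtain ⟨⟨e,fq⟩,hp⟩ := p
      by_cases he : e = 0
      · subst he
        have hfq : fq = b+1 := by omega
        subst hfq
        rw [cpt_lf_self]
      · rw [hYc' e fq hp (by omega), cpt_lf_ne k C _ _ _ (mkne (by omega))]
    have hwtot : totD k C dh dv (b+1) (lf k C (b+1) ⟨(0, b+1), by omega⟩ w)
        = lf k C (b+1+1) (⟨(0, b+1+1), by omega⟩ : TotIdx (b+1+1)) (z.val.val) := by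
      rw [← hY'eq, hYd', hY0tot]
    rw [totD_lf' k C dh dv] at hwtot
    have hdw : dh 0 (b+1) w = 0 := by
      have h5 := congrArg (cpt k C (b+1+1) ⟨(0+1, b+1), by omega⟩) hwtot
      rw [map_add, cpt_lf_self, cpt_lf_ne k C _ _ _ (mkne (by omega)), add_zero,
        cpt_lf_ne k C _ _ _ (mkne (by omega))] at h5
      exact h5
    have hvw : dv 0 (b+1) w = z.val.val := by
      have h5 := congrArg (cpt k C (b+1+1) ⟨(0, b+1+1), by omega⟩) hwtot
      rw [map_add, cpt_lf_ne k C _ _ _ (mkne (by omega))] at h5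
      have h6 := (zero_add _).symm.trans h5
      exact ((cpt_lf_self k C (b+1+1) ⟨(0, b+1+1), by omega⟩ (dv 0 (b+1) w)).symm.trans h6).trans
        (cpt_lf_self k C (b+1+1) ⟨(0, b+1+1), by omega⟩ (z.val.val))
    rw [hNdef, Submodule.mem_comap]
    refine ⟨⟨w, LinearMap.mem_ker.mpr hdw⟩, ?_⟩
    apply Subtype.ext
    rw [hdZ (b+1) ⟨w, LinearMap.mem_ker.mpr hdw⟩]
    exact hvw
  -- surjectivity
  have hsurj : Function.Surjective g := by
    intro qbar
    obtain ⟨cK, rfl⟩ := Submodule.mkQ_surjective N' qbar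
    have hc : dh (b+1) 0 cK.val = 0 := cK.2
    obtain ⟨Y, s1, s2, s3, s4⟩ :=
      stair k C dh dv hdv hanti hrows (b+1) (b+1) 0 (by omega) cK.val
        (by rw [hc, map_zero])
    set z0 := cpt k C (b+1+1) ⟨(0, b+1+1), by omega⟩ (totD k C dh dv (b+1) Y) with hz0def
    have hY : totD k C dh dv (b+1) Y = lf k C (b+1+1) (⟨(0, b+1+1), by omega⟩ : TotIdx (b+1+1)) z0 := by
      apply tot_ext k C (b+1+1)
      intro p
      obtain ⟨⟨e,fq⟩,hp⟩ := p
      by_cases he0 : e = 0 ∧ fq = b+1+1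
      · obtain ⟨rfl, rfl⟩ := he0
        rw [cpt_lf_self]
      · rw [cpt_lf_ne k C _ _ _ (mkne (by omega))]
        by_cases he1 : e = b+1+1 ∧ fq = 0
        · obtain ⟨rfl, rfl⟩ := he1
          exact s4.trans hc
        · exact s3 e fq hp (by omega) (by omega)
    have hzz : totD k C dh dv (b+1+1) (lf k C (b+1+1) (⟨(0, b+1+1), by omega⟩ : TotIdx (b+1+1)) z0) = 0 := by
      rw [← hY]
      exact totD_totD k C dh dv hdh hdv hanti (b+1) Y
    rw [totD_lf' k C dh dv] at hzz
    have hdz0 : dh 0 (b+1+1) z0 = 0 := by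
      have h5 := congrArg (cpt k C (b+1+1+1) ⟨(0+1, b+1+1), by omega⟩) hzz
      rw [map_add, cpt_lf_self, cpt_lf_ne k C _ _ _ (mkne (by omega)), add_zero,
        map_zero] at h5
      exact h5
    have hvz0 : dv 0 (b+1+1) z0 = 0 := by
      have h5 := congrArg (cpt k C (b+1+1+1) ⟨(0, b+1+1+1), by omega⟩) hzz
      rw [map_add, cpt_lf_ne k C _ _ _ (mkne (by omega)), map_zero] at h5
      have h6 := (zero_add _).symm.trans h5
      exact ((cpt_lf_self k C (b+1+1+1) ⟨(0, b+1+1+1), by omega⟩ (dv 0 (b+1+1) z0)).symm.trans h6)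
    have hzK1mem : z0 ∈ LinearMap.ker (dh 0 (b+2)) := LinearMap.mem_ker.mpr hdz0
    have hzK1 : dZ (b+2) ⟨z0, hzK1mem⟩ = 0 := by
      apply Subtype.ext
      rw [hdZ (b+2) ⟨z0, hzK1mem⟩]
      exact hvz0.trans rfl
    refine ⟨(⟨⟨z0, hzK1mem⟩, LinearMap.mem_ker.mpr hzK1⟩ :
      ↥(LinearMap.ker (dZ (b+2)))), ?_⟩
    set zK : ↥(LinearMap.ker (dZ (b+2))) := ⟨⟨z0, hzK1mem⟩, LinearMap.mem_ker.mpr hzK1⟩ with hzKdef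
    have hEY : totD k C dh dv (b+1) Y = lf k C (b+1+1) (⟨(0, b+1+1), by omega⟩ : TotIdx (b+1+1)) (zK.val.val) := hY
    obtain ⟨X, hXg⟩ := hdiff zK Y hEY
    rw [s1] at hXg
    show g zK = N'.mkQ cK
    rw [hgdef]
    simp only [LinearMap.comp_apply, Submodule.mkQ_apply]
    rw [Submodule.Quotient.eq]
    rw [hN'def, Submodule.mem_comap]
    refine ⟨cpt k C b ⟨(b,0), by omega⟩ X, ?_⟩
    have hval : ((LinearMap.ker (dh (b+1) 0)).subtype) (g1 zK - cK)
        = g0 zK - cK.val := rfl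
    rw [hval, hXg]
    abel
  have hker_eq : LinearMap.ker g = N := le_antisymm hrev hfwd
  exact ⟨(Submodule.quotEquivOfEq N (LinearMap.ker g) hker_eq.symm).trans
    (g.quotKerEquivOfSurjective hsurj)⟩
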